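/- For every integer r ≥ 0, P(M_n − S_n = r) → V(r)/E[τ₊] as n → ∞, where V(r) = Σ_{j=0}^∞ P(S_j = −r, τ₊ > j). -/

import Mathlib

open MeasureTheory ProbabilityTheory Filter Real

variable {Ω : Type*}

/-- Partial sums of the increments: `Swalk X n = X 0 + ⋯ + X (n-1)` (the increments are
indexed from `0`, so `X 0` plays the role of `X₁`), with `Swalk X 0 = 0`. -/
def Swalk (X : ℕ → Ω → ℤ) (n : ℕ) (ω : Ω) : ℤ := ∑ i ∈ Finset.range n, X i ω

/-- `τ = inf {n ≥ 1 : S n ≤ 0}` (junk value `0` when the walk never becomes nonpositive). -/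
noncomputable def tauN (X : ℕ → Ω → ℤ) (ω : Ω) : ℕ :=
  sInf {n : ℕ | 1 ≤ n ∧ Swalk X n ω ≤ 0}

/-- `M_τ = max_{k ≤ τ} S k`. -/
noncomputable def Mtau (X : ℕ → Ω → ℤ) (ω : Ω) : ℤ :=
  (Finset.range (tauN X ω + 1)).sup'
    (Finset.nonempty_range_iff.mpr (Nat.succ_ne_zero _)) (fun k => Swalk X k ω)

/-- `θ_τ = min {n ≥ 0 : S n = M_τ}`. -/
noncomputable def thetaTau (X : ℕ → Ω → ℤ) (ω : Ω) : ℕ :=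
  sInf {n : ℕ | Swalk X n ω = Mtau X ω}

/-- `M n = max_{k ≤ n} S k`. -/
noncomputable def Mwalk (X : ℕ → Ω → ℤ) (n : ℕ) (ω : Ω) : ℤ :=
  (Finset.range (n + 1)).sup'
    (Finset.nonempty_range_iff.mpr (Nat.succ_ne_zero _)) (fun k => Swalk X k ω)

/-- Probability of an event, as a real number. -/
noncomputable def pr [MeasurableSpace Ω] (P : Measure Ω) (E : Set Ω) : ℝ := (P E).toReal

/-- Standard normal distribution function `Φ`. -/
noncomputable def stdPhi (x : ℝ) : ℝ :=
  (Real.sqrt (2 * π))⁻¹ * ∫ t in Set.Iic x, Real.exp (-t ^ 2 / 2)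

set_option linter.unusedSectionVars false
set_option maxHeartbeats 1000000

/-- partial sum of a finite tuple, with junk `0` beyond the range -/
def psum {n : ℕ} (v : Fin n → ℤ) (i : ℕ) : ℤ :=
  ∑ j ∈ Finset.range i, if h : j < n then v ⟨j, h⟩ else 0

lemma psum_tuple {X : ℕ → Ω → ℤ} {n : ℕ} (ω : Ω) {i : ℕ} (hi : i ≤ n) :
    psum (fun j : Fin n => X j ω) i = Swalk X i ω := by
  refine Finset.sum_congr rfl fun j hj => ?_
  rw [dif_pos (lt_of_lt_of_le (Finset.mem_range.mp hj) hi)]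

lemma sum_range_add' (X : ℕ → Ω → ℤ) (ω : Ω) (k m : ℕ) :
    Swalk X (k + m) ω = Swalk X k ω + ∑ j ∈ Finset.range m, X (k + j) ω := by
  simp [Swalk, Finset.sum_range_add]

lemma psum_shift_tuple {X : ℕ → Ω → ℤ} {n k : ℕ} (ω : Ω) {m : ℕ} (hm : m ≤ n) :
    psum (fun j : Fin n => X (k + j) ω) m = Swalk X (k + m) ω - Swalk X k ω := by
  rw [sum_range_add' X ω k m]
  simp only [add_sub_cancel_left]
  refine Finset.sum_congr rfl fun j hj => ?_
  rw [dif_pos (lt_of_lt_of_le (Finset.mem_range.mp hj) hm)]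

lemma sum_rev (X : ℕ → Ω → ℤ) (ω : Ω) (k : ℕ) :
    ∀ i ≤ k, ∑ j ∈ Finset.range i, X (k - 1 - j) ω = Swalk X k ω - Swalk X (k - i) ω := by
  intro i
  induction i with
  | zero => simp
  | succ i ih =>
    intro hik
    rw [Finset.sum_range_succ, ih (le_of_lt (Nat.lt_of_succ_le hik))]
    have h1 : k - i = (k - (i + 1)) + 1 := by omega
    have h2 : k - 1 - i = k - (i + 1) := by omega
    rw [h1, h2]
    have h3 : Swalk X ((k - (i+1)) + 1) ω = Swalk X (k - (i+1)) ω + X (k - (i+1)) ω :=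
      Finset.sum_range_succ _ _
    rw [h3]; ring

lemma psum_rev_tuple {X : ℕ → Ω → ℤ} {k : ℕ} (ω : Ω) {i : ℕ} (hi : i ≤ k) :
    psum (fun j : Fin k => X (k - 1 - j) ω) i = Swalk X k ω - Swalk X (k - i) ω := by
  rw [← sum_rev X ω k i hi]
  refine Finset.sum_congr rfl fun j hj => ?_
  rw [dif_pos (lt_of_lt_of_le (Finset.mem_range.mp hj) hi)]

section Meas
variable [MeasurableSpace Ω] {P : Measure Ω} [IsProbabilityMeasure P]

lemma measSet_pi_int {n : ℕ} (s : Set (Fin n → ℤ)) : MeasurableSet s :=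
  s.to_countable.measurableSet

lemma tuple_law {X : ℕ → Ω → ℤ} (hXmeas : ∀ i, Measurable (X i))
    (hXindep : iIndepFun X P)
    (hXident : ∀ i, IdentDistrib (X i) (X 0) P P)
    (n : ℕ) (σ : Fin n → ℕ) (hσ : Function.Injective σ) :
    P.map (fun ω (i : Fin n) => X (σ i) ω) = Measure.pi (fun _ => P.map (X 0)) := by
  have hcast : IsProbabilityMeasure (P.map (X 0)) :=
    Measure.isProbabilityMeasure_map (hXmeas 0).aemeasurable
  refine (Measure.pi_eq ?_).symm
  intro s hs
  rw [Measure.map_apply (measurable_pi_lambda _ fun i => hXmeas (σ i)) (measSet_pi_int _)]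
  classical
  set sets : ℕ → Set ℤ := fun m =>
    if h : ∃ i, σ i = m then s (h.choose) else Set.univ with hsets
  have hsets_eq : ∀ i : Fin n, sets (σ i) = s i := by
    intro i
    have h : ∃ j, σ j = σ i := ⟨i, rfl⟩
    have := h.choose_spec
    simp only [hsets, dif_pos h]
    rw [hσ this]
  have hpre : (fun ω (i : Fin n) => X (σ i) ω) ⁻¹' Set.pi Set.univ s
      = ⋂ m ∈ Finset.image σ Finset.univ, X m ⁻¹' sets m := by
    ext ω
    simp only [Set.mem_preimage, Set.mem_pi, Set.mem_univ, forall_true_left, Set.mem_iInter,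
      Finset.mem_image, Finset.mem_univ, true_and]
    constructor
    · rintro h m ⟨i, rfl⟩; rw [hsets_eq]; exact h i
    · intro h i; rw [← hsets_eq i]; exact h (σ i) ⟨i, rfl⟩
  rw [hpre, hXindep.measure_inter_preimage_eq_mul _ (fun i _ => trivial),
    Finset.prod_image (fun a _ b _ h => hσ h)]
  refine Finset.prod_congr rfl fun i _ => ?_
  rw [hsets_eq, ← Measure.map_apply (hXmeas (σ i)) (s i).to_countable.measurableSet,
    (hXident (σ i)).map_eq]


lemma event_eq_of_inj {X : ℕ → Ω → ℤ} (hXmeas : ∀ i, Measurable (X i))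
    (hXindep : iIndepFun X P)
    (hXident : ∀ i, IdentDistrib (X i) (X 0) P P)
    {n : ℕ} {σ τ : Fin n → ℕ} (hσ : Function.Injective σ) (hτ : Function.Injective τ)
    (s : Set (Fin n → ℤ)) :
    P ((fun ω (i : Fin n) => X (σ i) ω) ⁻¹' s) = P ((fun ω (i : Fin n) => X (τ i) ω) ⁻¹' s) := by
  rw [← Measure.map_apply (measurable_pi_lambda _ fun i => hXmeas (σ i)) (measSet_pi_int s),
      ← Measure.map_apply (measurable_pi_lambda _ fun i => hXmeas (τ i)) (measSet_pi_int s),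
      tuple_law hXmeas hXindep hXident n σ hσ, tuple_law hXmeas hXindep hXident n τ hτ]

lemma shift_event {X : ℕ → Ω → ℤ} (hXmeas : ∀ i, Measurable (X i))
    (hXindep : iIndepFun X P)
    (hXident : ∀ i, IdentDistrib (X i) (X 0) P P)
    (k : ℕ) {n : ℕ} (s : Set (Fin n → ℤ)) :
    P ((fun ω (i : Fin n) => X (k + i) ω) ⁻¹' s) = P ((fun ω (i : Fin n) => X i ω) ⁻¹' s) :=
  event_eq_of_inj hXmeas hXindep hXident
    (fun i j h => by simpa [Fin.val_injective.eq_iff] using Fin.val_injective (by omega : (i:ℕ) = j))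
    (fun i j h => Fin.val_injective h) s

lemma rev_event {X : ℕ → Ω → ℤ} (hXmeas : ∀ i, Measurable (X i))
    (hXindep : iIndepFun X P)
    (hXident : ∀ i, IdentDistrib (X i) (X 0) P P)
    {k : ℕ} (s : Set (Fin k → ℤ)) :
    P ((fun ω (i : Fin k) => X (k - 1 - i) ω) ⁻¹' s) = P ((fun ω (i : Fin k) => X i ω) ⁻¹' s) :=
  event_eq_of_inj hXmeas hXindep hXident
    (fun i j h => by
      have hi := i.isLt; have hj := j.isLt
      exact Fin.val_injective (by omega : (i:ℕ) = j))
    (fun i j h => Fin.val_injective h) s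

lemma indep_tuples {X : ℕ → Ω → ℤ} (hXmeas : ∀ i, Measurable (X i))
    (hXindep : iIndepFun X P) (k m : ℕ) :
    IndepFun (fun ω (i : Fin k) => X i ω) (fun ω (i : Fin m) => X (k + i) ω) P := by
  have hd : Disjoint (Finset.range k) (Finset.Ico k (k + m)) := by
    simp only [Finset.disjoint_left, Finset.mem_range, Finset.mem_Ico]
    intro x hx; omega
  have h := hXindep.indepFun_finset (Finset.range k) (Finset.Ico k (k + m)) hd hXmeas
  have hφ : Measurable (fun (u : ↥(Finset.range k) → ℤ) (i : Fin k) =>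
      u ⟨(i : ℕ), Finset.mem_range.mpr i.isLt⟩) :=
    measurable_pi_lambda _ fun i => measurable_pi_apply _
  have hψ : Measurable (fun (u : ↥(Finset.Ico k (k + m)) → ℤ) (i : Fin m) =>
      u ⟨k + (i : ℕ), Finset.mem_Ico.mpr ⟨Nat.le_add_right _ _, by omega⟩⟩) :=
    measurable_pi_lambda _ fun i => measurable_pi_apply _
  exact h.comp hφ hψ

end Meas
section Events
variable (X : ℕ → Ω → ℤ)

def Gev (k : ℕ) : Set Ω := {ω | ∀ i, 1 ≤ i → i ≤ k → 0 < Swalk X i ω}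
def Tev (k : ℕ) : Set Ω := {ω | ∀ i, 1 ≤ i → i ≤ k → Swalk X i ω ≤ 0}
def Vev (r : ℕ) (j : ℕ) : Set Ω :=
  {ω | Swalk X j ω = -(r : ℤ) ∧ ∀ i, 1 ≤ i → i ≤ j → Swalk X i ω ≤ 0}
def Aev (k : ℕ) : Set Ω := {ω | ∀ i, i < k → Swalk X i ω < Swalk X k ω}
def Bev (r : ℕ) (k n : ℕ) : Set Ω :=
  {ω | Swalk X n ω - Swalk X k ω = -(r : ℤ) ∧
    ∀ m, 1 ≤ m → m ≤ n - k → Swalk X (k + m) ω - Swalk X k ω ≤ 0}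
def D1ev (k : ℕ) : Set Ω := {ω | ∀ i, i ≤ k → Swalk X k ω ≤ Swalk X i ω}
def D2ev (k n : ℕ) : Set Ω := {ω | ∀ j, k < j → j ≤ n → Swalk X k ω < Swalk X j ω}

def sAset (k : ℕ) : Set (Fin k → ℤ) := {v | ∀ i, i < k → psum v i < psum v k}
def sDset (k : ℕ) : Set (Fin k → ℤ) := {v | ∀ i, i ≤ k → psum v k ≤ psum v i}
def sBset (r : ℕ) (m : ℕ) : Set (Fin m → ℤ) :=
  {v | psum v m = -(r : ℤ) ∧ ∀ i, 1 ≤ i → i ≤ m → psum v i ≤ 0}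
def sGset (m : ℕ) : Set (Fin m → ℤ) := {v | ∀ i, 1 ≤ i → i ≤ m → 0 < psum v i}

lemma Swalk_zero (ω : Ω) : Swalk X 0 ω = 0 := by simp [Swalk]

lemma Aev_pre (k : ℕ) : Aev X k = (fun ω (i : Fin k) => X i ω) ⁻¹' sAset k := by
  ext ω
  simp only [Aev, sAset, Set.mem_setOf_eq, Set.mem_preimage]
  refine forall_congr' fun i => imp_congr_right fun hik => ?_
  rw [psum_tuple ω (le_of_lt hik), psum_tuple ω le_rfl]

lemma Arev_pre (k : ℕ) : (fun ω (i : Fin k) => X (k - 1 - i) ω) ⁻¹' sAset k = Gev X k := by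
  ext ω
  simp only [sAset, Set.mem_setOf_eq, Set.mem_preimage, Gev]
  constructor
  · intro h m h1 hmk
    have hh := h (k - m) (by omega)
    rw [psum_rev_tuple ω (by omega : k - m ≤ k), psum_rev_tuple ω le_rfl,
      Nat.sub_self, (by omega : k - (k - m) = m)] at hh
    rw [Swalk_zero] at hh
    linarith
  · intro h i hik
    rw [psum_rev_tuple ω (le_of_lt hik), psum_rev_tuple ω le_rfl, Nat.sub_self, Swalk_zero]
    have := h (k - i) (by omega) (by omega)
    linarith

lemma D1_pre (k : ℕ) : D1ev X k = (fun ω (i : Fin k) => X i ω) ⁻¹' sDset k := by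
  ext ω
  simp only [D1ev, sDset, Set.mem_setOf_eq, Set.mem_preimage]
  refine forall_congr' fun i => imp_congr_right fun hik => ?_
  rw [psum_tuple ω hik, psum_tuple ω le_rfl]

lemma Drev_pre (k : ℕ) : (fun ω (i : Fin k) => X (k - 1 - i) ω) ⁻¹' sDset k = Tev X k := by
  ext ω
  simp only [sDset, Set.mem_setOf_eq, Set.mem_preimage, Tev]
  constructor
  · intro h m h1 hmk
    have hh := h (k - m) (by omega)
    rw [psum_rev_tuple ω (by omega : k - m ≤ k), psum_rev_tuple ω le_rfl,
      Nat.sub_self, (by omega : k - (k - m) = m)] at hh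
    rw [Swalk_zero] at hh
    linarith
  · intro h i hik
    rw [psum_rev_tuple ω hik, psum_rev_tuple ω le_rfl, Nat.sub_self, Swalk_zero]
    rcases Nat.eq_zero_or_pos (k - i) with h0 | hpos
    · rw [h0, Swalk_zero]
    · have := h (k - i) hpos (by omega)
      linarith

lemma Bev_pre (r : ℕ) {k n : ℕ} (hkn : k ≤ n) :
    Bev X r k n = (fun ω (i : Fin (n - k)) => X (k + i) ω) ⁻¹' sBset r (n - k) := by
  ext ω
  simp only [Bev, sBset, Set.mem_setOf_eq, Set.mem_preimage]
  rw [psum_shift_tuple ω le_rfl, (by omega : k + (n - k) = n)]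
  refine and_congr Iff.rfl (forall_congr' fun m => imp_congr_right fun h1 =>
    imp_congr_right fun hm => ?_)
  rw [psum_shift_tuple ω hm]

lemma Bid_pre (r m : ℕ) : (fun ω (i : Fin m) => X i ω) ⁻¹' sBset r m = Vev X r m := by
  ext ω
  simp only [sBset, Set.mem_setOf_eq, Set.mem_preimage, Vev]
  rw [psum_tuple ω le_rfl]
  refine and_congr Iff.rfl (forall_congr' fun i => imp_congr_right fun h1 =>
    imp_congr_right fun hi => ?_)
  rw [psum_tuple ω hi]

lemma D2_pre {k n : ℕ} (hkn : k ≤ n) :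
    D2ev X k n = (fun ω (i : Fin (n - k)) => X (k + i) ω) ⁻¹' sGset (n - k) := by
  ext ω
  simp only [D2ev, sGset, Set.mem_setOf_eq, Set.mem_preimage]
  constructor
  · intro h m h1 hm
    rw [psum_shift_tuple ω hm]
    have := h (k + m) (by omega) (by omega)
    linarith
  · intro h j hkj hjn
    have hh := h (j - k) (by omega) (by omega)
    rw [psum_shift_tuple ω (by omega : j - k ≤ n - k), (by omega : k + (j - k) = j)] at hh
    linarith

lemma Gid_pre (m : ℕ) : (fun ω (i : Fin m) => X i ω) ⁻¹' sGset m = Gev X m := by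
  ext ω
  simp only [sGset, Set.mem_setOf_eq, Set.mem_preimage, Gev]
  refine forall_congr' fun i => imp_congr_right fun h1 => imp_congr_right fun hi => ?_
  rw [psum_tuple ω hi]

lemma Tid_pre (m : ℕ) : (fun ω (i : Fin m) => X i ω) ⁻¹' sDset m = D1ev X m :=
  (D1_pre X m).symm

end Events
section Decomp
variable (X : ℕ → Ω → ℤ)

lemma le_Mwalk {i n : ℕ} (hin : i ≤ n) (ω : Ω) : Swalk X i ω ≤ Mwalk X n ω :=
  Finset.le_sup' (fun k => Swalk X k ω) (Finset.mem_range.mpr (Nat.lt_succ_of_le hin))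

lemma Mwalk_eq {k n : ℕ} (hkn : k ≤ n) (ω : Ω)
    (h : ∀ j, j ≤ n → Swalk X j ω ≤ Swalk X k ω) : Mwalk X n ω = Swalk X k ω :=
  le_antisymm (Finset.sup'_le _ _ fun j hj => h j (Nat.lt_succ_iff.mp (Finset.mem_range.mp hj)))
    (le_Mwalk X hkn ω)

lemma decompM (r n : ℕ) :
    {ω : Ω | Mwalk X n ω - Swalk X n ω = (r : ℤ)}
      = ⋃ k ∈ Finset.range (n + 1), Aev X k ∩ Bev X r k n := by
  ext ω
  simp only [Set.mem_setOf_eq, Set.mem_iUnion, Finset.mem_range, Nat.lt_succ_iff]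
  constructor
  · intro hM
    obtain ⟨k', hk', hkeq⟩ := Finset.exists_mem_eq_sup'
      (Finset.nonempty_range_iff.mpr (Nat.succ_ne_zero n)) (fun k => Swalk X k ω)
    have hk'n : k' ≤ n := Nat.lt_succ_iff.mp (Finset.mem_range.mp hk')
    set KS := {k | k ≤ n ∧ ∀ j, j ≤ n → Swalk X j ω ≤ Swalk X k ω} with hKS
    have hne : k' ∈ KS := ⟨hk'n, fun j hj => hkeq ▸ le_Mwalk X hj ω⟩
    set k₀ := sInf KS with hk₀
    have hmem : k₀ ∈ KS := Nat.sInf_mem ⟨k', hne⟩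
    have hk₀n : k₀ ≤ n := hmem.1
    refine ⟨k₀, hk₀n, ?_, ?_, ?_⟩
    · -- Aev
      intro i hik
      rcases lt_or_eq_of_le (hmem.2 i (by omega)) with h | h
      · exact h
      · exfalso
        have : i ∈ KS := ⟨by omega, fun j hj => h ▸ hmem.2 j hj⟩
        exact absurd (Nat.sInf_le this) (by omega)
    · -- S n - S k₀ = -r
      have hMk : Mwalk X n ω = Swalk X k₀ ω := Mwalk_eq X hk₀n ω hmem.2
      rw [hMk] at hM; linarith
    · intro m h1 hm
      have := hmem.2 (k₀ + m) (by omega)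
      linarith
  · rintro ⟨k, hkn, hA, hB1, hB2⟩
    have hmax : ∀ j, j ≤ n → Swalk X j ω ≤ Swalk X k ω := by
      intro j hj
      rcases lt_or_ge j k with h | h
      · exact le_of_lt (hA j h)
      · rcases Nat.eq_zero_or_pos (j - k) with h0 | hpos
        · have : j = k := by omega
          rw [this]
        · have := hB2 (j - k) hpos (by omega)
          rw [(by omega : k + (j - k) = j)] at this
          linarith
    rw [Mwalk_eq X hkn ω hmax]
    linarith

lemma disjM (r n : ℕ) :
    (Finset.range (n + 1) : Set ℕ).PairwiseDisjoint (fun k => Aev X k ∩ Bev X r k n) := by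
  have key : ∀ k l, k ≤ n → l ≤ n → k < l →
      Disjoint (Aev X k ∩ Bev X r k n) (Aev X l ∩ Bev X r l n) := by
    intro k l hk hl h
    refine Set.disjoint_left.mpr fun ω hω hω' => ?_
    obtain ⟨hAk, hBk⟩ := hω
    obtain ⟨hAl, hBl⟩ := hω'
    have h1 : Swalk X k ω < Swalk X l ω := hAl k h
    have h2 := hBk.2 (l - k) (by omega) (by omega)
    rw [(by omega : k + (l - k) = l)] at h2
    linarith
  intro k hk l hl hkl
  simp only [Finset.coe_range, Set.mem_Iio, Nat.lt_succ_iff] at hk hl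
  rcases lt_or_gt_of_ne hkl with h | h
  · exact key k l hk hl h
  · exact (key l k hl hk h).symm

lemma decompOne (n : ℕ) :
    (Set.univ : Set Ω) = ⋃ k ∈ Finset.range (n + 1), D1ev X k ∩ D2ev X k n := by
  ext ω
  simp only [Set.mem_univ, true_iff, Set.mem_iUnion, Finset.mem_range, Nat.lt_succ_iff]
  obtain ⟨k', hk', hkeq⟩ := Finset.exists_mem_eq_inf'
    (Finset.nonempty_range_iff.mpr (Nat.succ_ne_zero n)) (fun k => Swalk X k ω)
  have hk'n : k' ≤ n := Nat.lt_succ_iff.mp (Finset.mem_range.mp hk')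
  set T := {k | k ≤ n ∧ ∀ j, j ≤ n → Swalk X k ω ≤ Swalk X j ω} with hT
  have hk'T : k' ∈ T := by
    refine ⟨hk'n, fun j hj => ?_⟩
    rw [← hkeq]
    exact Finset.inf'_le _ (Finset.mem_range.mpr (by omega))
  set U := {m | m ≤ n ∧ (n - m) ∈ T} with hU
  have hUne : (n - k') ∈ U := by
    refine ⟨by omega, ?_⟩
    rw [(by omega : n - (n - k') = k')]
    exact hk'T
  set m₀ := sInf U with hm₀
  have hm₀U : m₀ ∈ U := Nat.sInf_mem ⟨_, hUne⟩
  set k₁ := n - m₀ with hk₁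
  have hk₁T : k₁ ∈ T := hm₀U.2
  have hk₁max : ∀ j ∈ T, j ≤ k₁ := by
    intro j hj
    have hjn' : j ≤ n := hj.1
    by_contra hlt
    have h1 : n - j ∈ U := by
      refine ⟨by omega, ?_⟩
      rw [(by omega : n - (n - j) = j)]
      exact hj
    have := Nat.sInf_le h1
    omega
  refine ⟨k₁, hk₁T.1, fun i hi => hk₁T.2 i (by omega), ?_⟩
  intro j hk1j hjn
  rcases lt_or_eq_of_le (hk₁T.2 j hjn) with h | h
  · exact h
  · exfalso
    have hjT : j ∈ T := ⟨hjn, fun i hi => h ▸ hk₁T.2 i hi⟩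
    exact absurd (hk₁max j hjT) (by omega)

lemma disjOne (n : ℕ) :
    (Finset.range (n + 1) : Set ℕ).PairwiseDisjoint (fun k => D1ev X k ∩ D2ev X k n) := by
  have key : ∀ k l, k ≤ n → l ≤ n → k < l →
      Disjoint (D1ev X k ∩ D2ev X k n) (D1ev X l ∩ D2ev X l n) := by
    intro k l hk hl h
    refine Set.disjoint_left.mpr fun ω hω hω' => ?_
    obtain ⟨hD1k, hD2k⟩ := hω
    obtain ⟨hD1l, hD2l⟩ := hω'
    have h1 : Swalk X k ω < Swalk X l ω := hD2k l h hl
    have h2 : Swalk X l ω ≤ Swalk X k ω := hD1l k (by omega)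
    linarith
  intro k hk l hl hkl
  simp only [Finset.coe_range, Set.mem_Iio, Nat.lt_succ_iff] at hk hl
  rcases lt_or_gt_of_ne hkl with h | h
  · exact key k l hk hl h
  · exact (key l k hl hk h).symm

end Decomp
section MeasureIdent
variable [MeasurableSpace Ω] {P : Measure Ω} [IsProbabilityMeasure P]
variable {X : ℕ → Ω → ℤ} (hXmeas : ∀ i, Measurable (X i))
  (hXindep : iIndepFun X P)
  (hXident : ∀ i, IdentDistrib (X i) (X 0) P P)

lemma meas_tuple (hXmeas : ∀ i, Measurable (X i)) (k n : ℕ) :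
    Measurable (fun ω (i : Fin n) => X (k + i) ω) :=
  measurable_pi_lambda _ fun i => hXmeas _

include hXmeas in
lemma measSet_Aev (k : ℕ) : MeasurableSet (Aev X k) := by
  rw [Aev_pre]
  exact (measurable_pi_lambda _ fun i => hXmeas _) (measSet_pi_int _)

include hXmeas in
lemma measSet_Bev (r : ℕ) {k n : ℕ} (hkn : k ≤ n) : MeasurableSet (Bev X r k n) := by
  rw [Bev_pre X r hkn]
  exact (meas_tuple hXmeas k (n - k)) (measSet_pi_int _)

include hXmeas in
lemma measSet_D1ev (k : ℕ) : MeasurableSet (D1ev X k) := by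
  rw [D1_pre]
  exact (measurable_pi_lambda _ fun i => hXmeas _) (measSet_pi_int _)

include hXmeas in
lemma measSet_D2ev {k n : ℕ} (hkn : k ≤ n) : MeasurableSet (D2ev X k n) := by
  rw [D2_pre X hkn]
  exact (meas_tuple hXmeas k (n - k)) (measSet_pi_int _)

include hXmeas in
lemma measSet_Gev (k : ℕ) : MeasurableSet (Gev X k) := by
  rw [← Gid_pre]
  exact (measurable_pi_lambda _ fun i => hXmeas _) (measSet_pi_int _)

include hXmeas in
lemma measSet_Tev (k : ℕ) : MeasurableSet (Tev X k) := by
  rw [← Drev_pre]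
  exact (measurable_pi_lambda _ fun i => hXmeas _) (measSet_pi_int _)

include hXmeas in
lemma measSet_Vev (r j : ℕ) : MeasurableSet (Vev X r j) := by
  rw [← Bid_pre]
  exact (measurable_pi_lambda _ fun i => hXmeas _) (measSet_pi_int _)

include hXmeas hXindep hXident in
lemma measA_eq (k : ℕ) : P (Aev X k) = P (Gev X k) := by
  rw [Aev_pre, ← Arev_pre X k]
  exact (rev_event hXmeas hXindep hXident (sAset k)).symm

include hXmeas hXindep hXident in
lemma measD1_eq (k : ℕ) : P (D1ev X k) = P (Tev X k) := by
  rw [D1_pre, ← Drev_pre X k]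
  exact (rev_event hXmeas hXindep hXident (sDset k)).symm

include hXmeas hXindep hXident in
lemma measB_eq (r : ℕ) {k n : ℕ} (hkn : k ≤ n) : P (Bev X r k n) = P (Vev X r (n - k)) := by
  rw [Bev_pre X r hkn, shift_event hXmeas hXindep hXident k (sBset r (n - k)), Bid_pre]

include hXmeas hXindep hXident in
lemma measD2_eq {k n : ℕ} (hkn : k ≤ n) : P (D2ev X k n) = P (Gev X (n - k)) := by
  rw [D2_pre X hkn, shift_event hXmeas hXindep hXident k (sGset (n - k)), Gid_pre]

include hXmeas hXindep hXident in
lemma measM_sum (r n : ℕ) :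
    P {ω | Mwalk X n ω - Swalk X n ω = (r : ℤ)}
      = ∑ k ∈ Finset.range (n + 1), P (Gev X k) * P (Vev X r (n - k)) := by
  rw [decompM X r n, measure_biUnion_finset (disjM X r n) (fun k hk =>
    (measSet_Aev hXmeas k).inter
      (measSet_Bev hXmeas r (Nat.lt_succ_iff.mp (Finset.mem_range.mp hk))))]
  refine Finset.sum_congr rfl fun k hk => ?_
  have hkn : k ≤ n := Nat.lt_succ_iff.mp (Finset.mem_range.mp hk)
  rw [Aev_pre X k, Bev_pre X r hkn,
    (indep_tuples hXmeas hXindep k (n - k)).measure_inter_preimage_eq_mul _ _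
      (measSet_pi_int _) (measSet_pi_int _),
    ← Aev_pre X k, ← Bev_pre X r hkn, measA_eq hXmeas hXindep hXident k,
    measB_eq hXmeas hXindep hXident r hkn]

include hXmeas hXindep hXident in
lemma one_sum (n : ℕ) :
    (1 : ENNReal)
      = ∑ k ∈ Finset.range (n + 1), P (Tev X k) * P (Gev X (n - k)) := by
  have h0 : P Set.univ = 1 := measure_univ
  rw [← h0, decompOne X n, measure_biUnion_finset (disjOne X n) (fun k hk =>
    (measSet_D1ev hXmeas k).inter
      (measSet_D2ev hXmeas (Nat.lt_succ_iff.mp (Finset.mem_range.mp hk))))]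
  refine Finset.sum_congr rfl fun k hk => ?_
  have hkn : k ≤ n := Nat.lt_succ_iff.mp (Finset.mem_range.mp hk)
  rw [D1_pre X k, D2_pre X hkn,
    (indep_tuples hXmeas hXindep k (n - k)).measure_inter_preimage_eq_mul _ _
      (measSet_pi_int _) (measSet_pi_int _),
    ← D1_pre X k, ← D2_pre X hkn, measD1_eq hXmeas hXindep hXident k,
    measD2_eq hXmeas hXindep hXident hkn]

end MeasureIdent
section Positivity
variable [MeasurableSpace Ω] {P : Measure Ω} [IsProbabilityMeasure P]
variable {X : ℕ → Ω → ℤ} (hXmeas : ∀ i, Measurable (X i))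
  (hXindep : iIndepFun X P)
  (hXident : ∀ i, IdentDistrib (X i) (X 0) P P)

def Qev (X : ℕ → Ω → ℤ) : Set Ω := {ω | ∀ i, 1 ≤ i → 0 < Swalk X i ω}

lemma Qev_eq_iInter : Qev X = ⋂ k, Gev X k := by
  ext ω
  simp only [Qev, Gev, Set.mem_setOf_eq, Set.mem_iInter]
  exact ⟨fun h k i h1 hik => h i h1, fun h i h1 => h i i h1 le_rfl⟩

lemma Gev_antitone : Antitone (fun k => Gev X k) := by
  intro k l hkl ω hω i h1 hik
  exact hω i h1 (le_trans hik hkl)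

include hXmeas in
lemma tendsto_measG : Tendsto (fun k => P (Gev X k)) atTop (nhds (P (Qev X))) := by
  rw [Qev_eq_iInter]
  exact tendsto_measure_iInter_atTop
    (fun k => (measSet_Gev hXmeas k).nullMeasurableSet) Gev_antitone
    ⟨0, measure_ne_top _ _⟩

include hXmeas in
lemma measurable_Swalk (k : ℕ) : Measurable (Swalk X k) :=
  Finset.measurable_sum _ fun i _ => hXmeas i

include hXmeas in
lemma measSet_swalk_set (k : ℕ) (s : Set ℤ) : MeasurableSet {ω | Swalk X k ω ∈ s} :=
  measurable_Swalk hXmeas k s.to_countable.measurableSet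

-- (b) almost surely the walk is bounded below
include hXmeas hXindep hXident in
lemma ae_bounded_below (a : ℝ) (ha : 0 < a)
    (hXint : Integrable (fun ω => (X 0 ω : ℝ)) P)
    (hmean : ∫ ω, (X 0 ω : ℝ) ∂P = a) :
    P (⋃ m : ℕ, {ω | ∀ k, -((m : ℤ) + 1) < Swalk X k ω}) = 1 := by
  have hcast : Measurable (fun z : ℤ => (z : ℝ)) := measurable_from_top
  have hslln := strong_law_ae (μ := P) (fun i ω => (X i ω : ℝ)) hXint
    (fun i j hij => ((hXindep.comp (fun _ => (fun z : ℤ => (z : ℝ)))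
      (fun _ => hcast)).indepFun hij))
    (fun i => (hXident i).comp hcast)
  rw [hmean] at hslln
  have hset : (⋃ m : ℕ, {ω : Ω | ∀ k, -((m : ℤ) + 1) < Swalk X k ω})
      = ⋃ m : ℕ, ⋂ k, {ω : Ω | Swalk X k ω ∈ {z : ℤ | -((m : ℤ) + 1) < z}} := by
    ext ω
    simp only [Set.mem_iUnion, Set.mem_iInter, Set.mem_setOf_eq]
  rw [hset]
  refine (mem_ae_iff_prob_eq_one (μ := P) (MeasurableSet.iUnion fun (m : ℕ) => MeasurableSet.iInter fun (k : ℕ) =>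
      measSet_swalk_set hXmeas k {z | -((m : ℤ) + 1) < z})).mp ?_
  filter_upwards [hslln] with ω hω
  have hev : ∀ᶠ n : ℕ in atTop, a / 2 < (n : ℝ)⁻¹ • ∑ i ∈ Finset.range n, (X i ω : ℝ) :=
    hω.eventually (eventually_gt_nhds (by linarith))
  obtain ⟨N, hN⟩ := eventually_atTop.mp hev
  have hpos : ∀ n, N + 1 ≤ n → 0 < Swalk X n ω := by
    intro n hn
    have h1 := hN n (by omega)
    have hn0 : (0 : ℝ) < n := by
      have : 0 < n := by omega
      exact_mod_cast this
    have h2 : (0 : ℝ) < ∑ i ∈ Finset.range n, (X i ω : ℝ) := by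
      rw [smul_eq_mul] at h1
      by_contra hc
      push_neg at hc
      have : (n : ℝ)⁻¹ * ∑ i ∈ Finset.range n, (X i ω : ℝ) ≤ 0 :=
        mul_nonpos_of_nonneg_of_nonpos (by positivity) hc
      linarith
    have h3 : ((Swalk X n ω : ℤ) : ℝ) = ∑ i ∈ Finset.range n, (X i ω : ℝ) := by
      simp [Swalk]
    have : (0 : ℝ) < ((Swalk X n ω : ℤ) : ℝ) := by rw [h3]; exact h2
    exact_mod_cast this
  set m := (Finset.range (N + 1)).sup (fun k => (Swalk X k ω).natAbs) with hm
  refine Set.mem_iUnion.mpr ⟨m, Set.mem_iInter.mpr fun k => ?_⟩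
  show -((m : ℤ) + 1) < Swalk X k ω
  rcases le_or_gt (N + 1) k with h | h
  · have := hpos k h
    omega
  · have hk : k ∈ Finset.range (N + 1) := Finset.mem_range.mpr h
    have h2 : (Swalk X k ω).natAbs ≤ m := Finset.le_sup (f := fun j => (Swalk X j ω).natAbs) hk
    omega

end Positivity
section Positivity2
variable [MeasurableSpace Ω] {P : Measure Ω} [IsProbabilityMeasure P]
variable {X : ℕ → Ω → ℤ} (hXmeas : ∀ i, Measurable (X i))
  (hXindep : iIndepFun X P)
  (hXident : ∀ i, IdentDistrib (X i) (X 0) P P)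

lemma c_pos (a : ℝ) (ha : 0 < a) (hXint : Integrable (fun ω => (X 0 ω : ℝ)) P)
    (hmean : ∫ ω, (X 0 ω : ℝ) ∂P = a) : P {ω | 1 ≤ X 0 ω} ≠ 0 := by
  intro h0
  have hae : ∀ᵐ ω ∂P, (fun ω => (X 0 ω : ℝ)) ω ≤ 0 := by
    have hnm : ∀ᵐ ω ∂P, ω ∉ {ω | 1 ≤ X 0 ω} := measure_eq_zero_iff_ae_notMem.mp h0
    filter_upwards [hnm] with ω hω
    simp only [Set.mem_setOf_eq, not_le] at hω
    have h1 : X 0 ω ≤ 0 := by omega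
    exact_mod_cast h1
  have h2 := integral_nonpos_of_ae hae
  rw [hmean] at h2; linarith

include hXmeas hXindep hXident in
lemma measE1 (m : ℕ) :
    P (⋂ i ∈ Finset.range m, X i ⁻¹' {z : ℤ | 1 ≤ z}) = P {ω | 1 ≤ X 0 ω} ^ m := by
  rw [hXindep.measure_inter_preimage_eq_mul (Finset.range m)
    (fun i _ => ({z : ℤ | 1 ≤ z}).to_countable.measurableSet)]
  have heach : ∀ i, P (X i ⁻¹' {z : ℤ | 1 ≤ z}) = P {ω | 1 ≤ X 0 ω} := by
    intro i
    rw [← Measure.map_apply (hXmeas i) ({z : ℤ | 1 ≤ z}).to_countable.measurableSet,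
      (hXident i).map_eq,
      Measure.map_apply (hXmeas 0) ({z : ℤ | 1 ≤ z}).to_countable.measurableSet]
    rfl
  rw [Finset.prod_congr rfl (fun i _ => heach i), Finset.prod_const, Finset.card_range]

lemma E1_pre (m : ℕ) :
    (⋂ i ∈ Finset.range m, X i ⁻¹' {z : ℤ | 1 ≤ z})
      = (fun ω (i : Fin m) => X i ω) ⁻¹' {v : Fin m → ℤ | ∀ i, 1 ≤ v i} := by
  ext ω
  simp only [Set.mem_iInter, Finset.mem_range, Set.mem_preimage, Set.mem_setOf_eq]
  exact ⟨fun h i => h i i.isLt, fun h i hi => h ⟨i, hi⟩⟩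

include hXmeas hXindep hXident in
lemma q_pos (a : ℝ) (ha : 0 < a) (hXint : Integrable (fun ω => (X 0 ω : ℝ)) P)
    (hmean : ∫ ω, (X 0 ω : ℝ) ∂P = a) : P (Qev X) ≠ 0 := by
  have h1 := ae_bounded_below hXmeas hXindep hXident a ha hXint hmean
  have hex : ∃ m : ℕ, P {ω | ∀ k, -((m : ℤ) + 1) < Swalk X k ω} ≠ 0 := by
    by_contra h
    push_neg at h
    have h2 := measure_iUnion_null (s := fun m : ℕ => {ω : Ω | ∀ k, -((m : ℤ) + 1) < Swalk X k ω}) h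
    rw [h1] at h2
    exact one_ne_zero h2
  obtain ⟨m, hm⟩ := hex
  have hc : P {ω | 1 ≤ X 0 ω} ≠ 0 := c_pos a ha hXint hmean
  set sF : ∀ K : ℕ, Set (Fin K → ℤ) :=
    fun K => {v | ∀ k, 1 ≤ k → k ≤ K → -((m : ℤ) + 1) < psum v k} with hsF
  have key : ∀ K : ℕ, P {ω | 1 ≤ X 0 ω} ^ (m + 1) * P {ω | ∀ k, -((m : ℤ) + 1) < Swalk X k ω}
      ≤ P (Gev X (m + 1 + K)) := by
    intro K
    have hsub : ((fun ω (i : Fin (m + 1)) => X i ω) ⁻¹' {v : Fin (m + 1) → ℤ | ∀ i, 1 ≤ v i})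
        ∩ ((fun ω (i : Fin K) => X (m + 1 + i) ω) ⁻¹' sF K) ⊆ Gev X (m + 1 + K) := by
      rintro ω ⟨hE1, hE2⟩
      simp only [Set.mem_preimage, Set.mem_setOf_eq] at hE1 hE2
      have hstep : ∀ i, i ≤ m + 1 → (i : ℤ) ≤ Swalk X i ω := by
        intro i
        induction i with
        | zero => intro _; simp [Swalk]
        | succ i ih =>
          intro hi
          have h3 : Swalk X (i + 1) ω = Swalk X i ω + X i ω := Finset.sum_range_succ _ _
          have h4 : 1 ≤ X i ω := hE1 ⟨i, by omega⟩
          have h5 := ih (by omega)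
          rw [h3]
          push_cast
          linarith
      intro i h1i hiK
      rcases le_or_gt i (m + 1) with h | h
      · have := hstep i h
        have : (1 : ℤ) ≤ Swalk X i ω := le_trans (by exact_mod_cast h1i) this
        omega
      · have hk := hE2 (i - (m + 1)) (by omega) (by omega)
        rw [psum_shift_tuple ω (by omega : i - (m + 1) ≤ K),
          (by omega : m + 1 + (i - (m + 1)) = i)] at hk
        have := hstep (m + 1) le_rfl
        push_cast at this
        omega
    have hsplit := (indep_tuples hXmeas hXindep (m + 1) K).measure_inter_preimage_eq_mul
      {v : Fin (m + 1) → ℤ | ∀ i, 1 ≤ v i} (sF K) (measSet_pi_int _) (measSet_pi_int _)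
    have hE1m : P ((fun ω (i : Fin (m + 1)) => X i ω) ⁻¹' {v : Fin (m + 1) → ℤ | ∀ i, 1 ≤ v i})
        = P {ω | 1 ≤ X 0 ω} ^ (m + 1) := by
      rw [← E1_pre, measE1 hXmeas hXindep hXident]
    have hE2m : P {ω | ∀ k, -((m : ℤ) + 1) < Swalk X k ω}
        ≤ P ((fun ω (i : Fin K) => X (m + 1 + i) ω) ⁻¹' sF K) := by
      rw [shift_event hXmeas hXindep hXident (m + 1) (sF K)]
      refine measure_mono fun ω hω => ?_
      simp only [Set.mem_setOf_eq] at hω ⊢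
      intro k h1k hkK
      rw [psum_tuple ω hkK]
      exact hω k
    calc P {ω | 1 ≤ X 0 ω} ^ (m + 1) * P {ω | ∀ k, -((m : ℤ) + 1) < Swalk X k ω}
        ≤ P ((fun ω (i : Fin (m + 1)) => X i ω) ⁻¹' {v : Fin (m + 1) → ℤ | ∀ i, 1 ≤ v i})
          * P ((fun ω (i : Fin K) => X (m + 1 + i) ω) ⁻¹' sF K) := by
          rw [hE1m]
          exact mul_le_mul_right hE2m _
      _ = P (_ ∩ _) := (hsplit).symm
      _ ≤ P (Gev X (m + 1 + K)) := measure_mono hsub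
  have hlim : P {ω | 1 ≤ X 0 ω} ^ (m + 1) * P {ω | ∀ k, -((m : ℤ) + 1) < Swalk X k ω}
      ≤ P (Qev X) := by
    refine ge_of_tendsto (tendsto_measG hXmeas) ?_
    rw [eventually_atTop]
    refine ⟨m + 1, fun k hk => ?_⟩
    have := key (k - (m + 1))
    rwa [(by omega : m + 1 + (k - (m + 1)) = k)] at this
  intro hq
  rw [hq, nonpos_iff_eq_zero] at hlim
  exact (mul_ne_zero (pow_ne_zero _ hc) hm) hlim

end Positivity2
lemma conv_lemma {v g : ℕ → ℝ} {q : ℝ} (hv0 : ∀ j, 0 ≤ v j) (hvsum : Summable v)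
    (hg0 : ∀ k, 0 ≤ g k) (hg1 : ∀ k, g k ≤ 1) (hganti : Antitone g)
    (hgq : Tendsto g atTop (nhds q)) :
    Tendsto (fun n => ∑ j ∈ Finset.range (n + 1), v j * g (n - j)) atTop
      (nhds (q * ∑' j, v j)) := by
  have hq0 : 0 ≤ q := ge_of_tendsto hgq (Eventually.of_forall hg0)
  have hq1 : q ≤ 1 := le_of_tendsto hgq (Eventually.of_forall hg1)
  have hqle : ∀ m, q ≤ g m := fun m =>
    le_of_tendsto hgq (eventually_atTop.mpr ⟨m, fun k hk => hganti hk⟩)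
  set Sv := ∑' j, v j with hSv
  have hSv0 : 0 ≤ Sv := tsum_nonneg hv0
  have hpart : ∀ K, ∑ j ∈ Finset.range K, v j ≤ Sv := fun K =>
    Summable.sum_le_tsum _ (fun j _ => hv0 j) hvsum
  rw [Metric.tendsto_atTop]
  intro ε hε
  have hε4 : 0 < ε / 4 := by linarith
  obtain ⟨K, hK⟩ : ∃ K, Sv - ∑ j ∈ Finset.range K, v j < ε / 4 := by
    have := hvsum.hasSum.tendsto_sum_nat
    rw [Metric.tendsto_atTop] at this
    obtain ⟨K, hK⟩ := this (ε / 4) hε4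
    refine ⟨K, ?_⟩
    have := hK K le_rfl
    rw [Real.dist_eq, abs_sub_lt_iff] at this
    linarith [this.2]
  set ε2 := ε / (4 * (Sv + 1)) with hε2
  have hε2pos : 0 < ε2 := by positivity
  obtain ⟨N1, hN1⟩ : ∃ N1, ∀ k ≥ N1, g k < q + ε2 := by
    rw [Metric.tendsto_atTop] at hgq
    obtain ⟨N1, hN1⟩ := hgq ε2 hε2pos
    refine ⟨N1, fun k hk => ?_⟩
    have := hN1 k hk
    rw [Real.dist_eq, abs_sub_lt_iff] at this
    linarith [this.1]
  refine ⟨K + N1, fun n hn => ?_⟩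
  rw [Real.dist_eq, abs_sub_lt_iff]
  have hKn : K ≤ n + 1 := by omega
  have hsplit : ∑ j ∈ Finset.range (n + 1), v j * g (n - j)
      = ∑ j ∈ Finset.range K, v j * g (n - j) + ∑ j ∈ Finset.Ico K (n + 1), v j * g (n - j) := by
    rw [Finset.range_eq_Ico, ← Finset.sum_Ico_consecutive _ (Nat.zero_le K) hKn,
      ← Finset.range_eq_Ico]
  constructor
  · -- upper bound
    have h1 : ∑ j ∈ Finset.range K, v j * g (n - j)
        ≤ ∑ j ∈ Finset.range K, v j * (q + ε2) := by
      refine Finset.sum_le_sum fun j hj => ?_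
      have hj' : j < K := Finset.mem_range.mp hj
      have : N1 ≤ n - j := by omega
      exact mul_le_mul_of_nonneg_left (le_of_lt (hN1 _ this)) (hv0 j)
    have h2 : ∑ j ∈ Finset.range K, v j * (q + ε2) = (q + ε2) * ∑ j ∈ Finset.range K, v j := by
      rw [Finset.mul_sum]; exact Finset.sum_congr rfl fun j _ => mul_comm _ _
    have h3 : (q + ε2) * ∑ j ∈ Finset.range K, v j ≤ (q + ε2) * Sv :=
      mul_le_mul_of_nonneg_left (hpart K) (by positivity)
    have h4 : ∑ j ∈ Finset.Ico K (n + 1), v j * g (n - j) ≤ ∑ j ∈ Finset.Ico K (n + 1), v j := by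
      refine Finset.sum_le_sum fun j _ => ?_
      calc v j * g (n - j) ≤ v j * 1 := mul_le_mul_of_nonneg_left (hg1 _) (hv0 j)
        _ = v j := mul_one _
    have h5 : ∑ j ∈ Finset.Ico K (n + 1), v j
        = ∑ j ∈ Finset.range (n + 1), v j - ∑ j ∈ Finset.range K, v j := by
      rw [Finset.range_eq_Ico, ← Finset.sum_Ico_consecutive _ (Nat.zero_le K) hKn,
        ← Finset.range_eq_Ico]
      ring
    have h6 : ∑ j ∈ Finset.Ico K (n + 1), v j ≤ Sv - ∑ j ∈ Finset.range K, v j := by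
      rw [h5]; linarith [hpart (n + 1)]
    have hε2Sv : ε2 * Sv ≤ ε / 4 := by
      rw [hε2]
      rw [div_mul_eq_mul_div]
      rw [div_le_iff₀ (by positivity)]
      nlinarith
    rw [hsplit]
    nlinarith
  · -- lower bound
    have h1 : q * ∑ j ∈ Finset.range (n + 1), v j ≤ ∑ j ∈ Finset.range (n + 1), v j * g (n - j) := by
      rw [Finset.mul_sum]
      refine Finset.sum_le_sum fun j _ => ?_
      calc q * v j = v j * q := mul_comm _ _
        _ ≤ v j * g (n - j) := mul_le_mul_of_nonneg_left (hqle _) (hv0 j)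
    have h2 : Sv - ∑ j ∈ Finset.range (n + 1), v j ≤ Sv - ∑ j ∈ Finset.range K, v j := by
      have : ∑ j ∈ Finset.range K, v j ≤ ∑ j ∈ Finset.range (n + 1), v j := by
        refine Finset.sum_le_sum_of_subset_of_nonneg ?_ (fun j _ _ => hv0 j)
        exact Finset.range_subset_range.mpr hKn
      linarith
    nlinarith [hpart (n + 1)]

section Final
variable [MeasurableSpace Ω] {P : Measure Ω} [IsProbabilityMeasure P]
variable {X : ℕ → Ω → ℤ} (hXmeas : ∀ i, Measurable (X i))
  (hXindep : iIndepFun X P)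
  (hXident : ∀ i, IdentDistrib (X i) (X 0) P P)

include hXmeas in
lemma gR_tendsto :
    Tendsto (fun k => (P (Gev X k)).toReal) atTop (nhds ((P (Qev X)).toReal)) :=
  (ENNReal.tendsto_toReal (measure_ne_top _ _)).comp (tendsto_measG hXmeas)

lemma gR_anti : Antitone (fun k => (P (Gev X k)).toReal) := fun _ _ hkl =>
  ENNReal.toReal_mono (measure_ne_top _ _) (measure_mono (Gev_antitone hkl))

lemma qR_le_gR (k : ℕ) : (P (Qev X)).toReal ≤ (P (Gev X k)).toReal :=
  ENNReal.toReal_mono (measure_ne_top _ _)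
    (measure_mono (by rw [Qev_eq_iInter]; exact Set.iInter_subset _ k))

lemma prob_toReal_le_one (s : Set Ω) : (P s).toReal ≤ 1 := by
  have := prob_le_one (μ := P) (s := s)
  simpa using ENNReal.toReal_mono ENNReal.one_ne_top this

include hXmeas hXindep hXident in
lemma one_eq_sum_real (n : ℕ) :
    (1 : ℝ) = ∑ k ∈ Finset.range (n + 1),
      (P (Tev X k)).toReal * (P (Gev X (n - k))).toReal := by
  have h := one_sum hXmeas hXindep hXident n
  have h2 := congrArg ENNReal.toReal h
  rw [ENNReal.toReal_one, ENNReal.toReal_sum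
    (fun k _ => ENNReal.mul_ne_top (measure_ne_top _ _) (measure_ne_top _ _))] at h2
  rw [h2]
  exact Finset.sum_congr rfl fun k _ => ENNReal.toReal_mul

include hXmeas hXindep hXident in
lemma M_eq_sum_real (r n : ℕ) :
    (P {ω | Mwalk X n ω - Swalk X n ω = (r : ℤ)}).toReal
      = ∑ j ∈ Finset.range (n + 1),
        (P (Vev X r j)).toReal * (P (Gev X (n - j))).toReal := by
  have h := measM_sum hXmeas hXindep hXident r n
  have h2 := congrArg ENNReal.toReal h
  rw [ENNReal.toReal_sum
    (fun k _ => ENNReal.mul_ne_top (measure_ne_top _ _) (measure_ne_top _ _))] at h2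
  rw [h2]
  have h3 := Finset.sum_range_reflect
    (fun k => (P (Gev X k) * P (Vev X r (n - k))).toReal) (n + 1)
  simp only [Nat.add_sub_cancel] at h3
  rw [← h3]
  refine Finset.sum_congr rfl fun j hj => ?_
  have hjn : j ≤ n := Nat.lt_succ_iff.mp (Finset.mem_range.mp hj)
  rw [(by omega : n - (n - j) = j), ENNReal.toReal_mul]
  ring

include hXmeas hXindep hXident in
lemma tR_summable (a : ℝ) (ha : 0 < a) (hXint : Integrable (fun ω => (X 0 ω : ℝ)) P)
    (hmean : ∫ ω, (X 0 ω : ℝ) ∂P = a) :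
    Summable (fun k => (P (Tev X k)).toReal) := by
  have hq : 0 < (P (Qev X)).toReal :=
    ENNReal.toReal_pos (q_pos hXmeas hXindep hXident a ha hXint hmean) (measure_ne_top _ _)
  refine summable_of_sum_range_le (c := 1 / (P (Qev X)).toReal)
    (fun k => ENNReal.toReal_nonneg) (fun n => ?_)
  have hb : ∑ k ∈ Finset.range (n + 1), (P (Tev X k)).toReal ≤ 1 / (P (Qev X)).toReal := by
    rw [le_div_iff₀ hq]
    calc (∑ k ∈ Finset.range (n + 1), (P (Tev X k)).toReal) * (P (Qev X)).toReal
        = ∑ k ∈ Finset.range (n + 1), (P (Tev X k)).toReal * (P (Qev X)).toReal := by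
          rw [Finset.sum_mul]
      _ ≤ ∑ k ∈ Finset.range (n + 1), (P (Tev X k)).toReal * (P (Gev X (n - k))).toReal :=
          Finset.sum_le_sum fun k _ =>
            mul_le_mul_of_nonneg_left (qR_le_gR _) ENNReal.toReal_nonneg
      _ = 1 := (one_eq_sum_real hXmeas hXindep hXident n).symm
  calc ∑ k ∈ Finset.range n, (P (Tev X k)).toReal
      ≤ ∑ k ∈ Finset.range (n + 1), (P (Tev X k)).toReal := by
        refine Finset.sum_le_sum_of_subset_of_nonneg
          (Finset.range_subset_range.mpr (by omega)) (fun k _ _ => ENNReal.toReal_nonneg)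
    _ ≤ 1 / (P (Qev X)).toReal := hb

include hXmeas hXindep hXident in
lemma sum_t_eq (a : ℝ) (ha : 0 < a) (hXint : Integrable (fun ω => (X 0 ω : ℝ)) P)
    (hmean : ∫ ω, (X 0 ω : ℝ) ∂P = a) :
    (P (Qev X)).toReal * ∑' n, (P (Tev X n)).toReal = 1 := by
  have h1 := conv_lemma (v := fun k => (P (Tev X k)).toReal)
    (g := fun k => (P (Gev X k)).toReal)
    (fun k => ENNReal.toReal_nonneg) (tR_summable hXmeas hXindep hXident a ha hXint hmean)
    (fun k => ENNReal.toReal_nonneg) (fun k => prob_toReal_le_one _)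
    gR_anti (gR_tendsto hXmeas)
  have h2 : (fun n => ∑ j ∈ Finset.range (n + 1),
      (P (Tev X j)).toReal * (P (Gev X (n - j))).toReal) = fun _ : ℕ => (1 : ℝ) :=
    funext fun n => (one_eq_sum_real hXmeas hXindep hXident n).symm
  rw [h2] at h1
  exact tendsto_nhds_unique h1 tendsto_const_nhds

end Final


/-- `P(M_n - S_n = r) → V(r)/E τ₊`, where `E τ₊ = Σ_n P(τ₊ > n)`. -/
theorem limit_distribution_of_max_minus_endpoint
    {Ω : Type*} [MeasurableSpace Ω] (P : Measure Ω) [IsProbabilityMeasure P]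
    (X : ℕ → Ω → ℤ)
    -- `X` are i.i.d. under `P`
    (hXmeas : ∀ i, Measurable (X i))
    (hXindep : iIndepFun X P)
    (hXident : ∀ i, IdentDistrib (X i) (X 0) P P)
    -- positive drift `E X₁ = a > 0`
    (a : ℝ) (ha : 0 < a)
    (hXint : Integrable (fun ω => (X 0 ω : ℝ)) P)
    (hmean : ∫ ω, (X 0 ω : ℝ) ∂P = a)
    -- variance `σ² ∈ (0,∞)`
    (σ2 : ℝ) (hσ2pos : 0 < σ2)
    (hXsq : Integrable (fun ω => ((X 0 ω : ℝ) - a) ^ 2) P)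
    (hσ2 : σ2 = ∫ ω, ((X 0 ω : ℝ) - a) ^ 2 ∂P)
    (r : ℕ) :
    Tendsto (fun n : ℕ => pr P {ω | Mwalk X n ω - Swalk X n ω = (r : ℤ)})
      atTop
      (nhds ((∑' j : ℕ, pr P {ω | Swalk X j ω = -(r : ℤ) ∧
            ∀ i : ℕ, 1 ≤ i → i ≤ j → Swalk X i ω ≤ 0})
        / ∑' n : ℕ, pr P {ω | ∀ j : ℕ, 1 ≤ j → j ≤ n → Swalk X j ω ≤ 0})) := by
  have hvsum : Summable (fun j => (P (Vev X r j)).toReal) :=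
    Summable.of_nonneg_of_le (fun j => ENNReal.toReal_nonneg)
      (fun j => ENNReal.toReal_mono (measure_ne_top _ _)
        (measure_mono (fun ω hω => hω.2)))
      (tR_summable hXmeas hXindep hXident a ha hXint hmean)
  have htend := conv_lemma (v := fun j => (P (Vev X r j)).toReal)
    (g := fun k => (P (Gev X k)).toReal)
    (fun j => ENNReal.toReal_nonneg) hvsum
    (fun k => ENNReal.toReal_nonneg) (fun k => prob_toReal_le_one _)
    gR_anti (gR_tendsto hXmeas)
  have hqt := sum_t_eq hXmeas hXindep hXident a ha hXint hmean
  have ht0 : (∑' n, (P (Tev X n)).toReal) ≠ 0 := by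
    intro h
    rw [h, mul_zero] at hqt
    exact zero_ne_one hqt
  have hdiv : (∑' j, (P (Vev X r j)).toReal) / (∑' n, (P (Tev X n)).toReal)
      = (P (Qev X)).toReal * ∑' j, (P (Vev X r j)).toReal := by
    rw [div_eq_iff ht0]
    linear_combination (-(∑' j, (P (Vev X r j)).toReal)) * hqt
  show Tendsto (fun n : ℕ => (P {ω | Mwalk X n ω - Swalk X n ω = (r : ℤ)}).toReal) atTop
    (nhds ((∑' j, (P (Vev X r j)).toReal) / ∑' n, (P (Tev X n)).toReal))
  have hfun : (fun n : ℕ => (P {ω | Mwalk X n ω - Swalk X n ω = (r : ℤ)}).toReal)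
      = fun n => ∑ j ∈ Finset.range (n + 1),
          (P (Vev X r j)).toReal * (P (Gev X (n - j))).toReal :=
    funext fun n => M_eq_sum_real hXmeas hXindep hXident r n
  rw [hfun, hdiv]
  exact htend
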